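/- Fix an integer n ≥ 2 and γ ∈ (1/2, 1). In the lower-bound chain with n states and MDP M(1), for every start state i ∈ {1,…,n} and every action sequence a : ℕ → Bool, the γ-discounted reward of a from i is strictly less than (1 + 2·γ^{n−i+1}) / (2·(1−γ)); in particular V*(i) < (1 + 2·γ^{n−i+1}) / (2·(1−γ)). -/

import Mathlib

/-- The deterministic trajectory in the lower-bound chain with states `{1, …, n}`:
from state `s`, action `true` moves right (capped at `n`), action `false` resets to `1`. -/
def traj (n : ℕ) (a : ℕ → Bool) (s : ℕ) : ℕ → ℕ
  | 0 => s
  | t + 1 => if a t then min (traj n a s t + 1) n else 1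

/-- The reward of a state in the MDP `M(1)`: `1/2` at states `1, …, n-1` and `1` at state `n`. -/
noncomputable def reward (n : ℕ) (s : ℕ) : ℝ := if s < n then 1 / 2 else 1

/-- The `γ`-discounted reward of the action sequence `a` started from state `s`. -/
noncomputable def discReward (n : ℕ) (γ : ℝ) (a : ℕ → Bool) (s : ℕ) : ℝ :=
  ∑' t : ℕ, γ ^ t * reward n (traj n a s t)

/-- The optimal value `V*(s)`: the supremum of the `γ`-discounted reward over
all action sequences. -/
noncomputable def Vstar (n : ℕ) (γ : ℝ) (s : ℕ) : ℝ :=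
  ⨆ a : ℕ → Bool, discReward n γ a s

/-- the paper's Lemma 9. In the chain MDP `M(1)` with `n ≥ 2` states and
`γ ∈ (1/2, 1)`, every action sequence from a start state `i ∈ {1,…,n}` gets discounted reward
strictly below `(1 + 2γ^(n-i+1)) / (2(1-γ))`; in particular `V*(i)` is below this bound. -/
theorem vstar_upper_bound (n : ℕ) (hn : 2 ≤ n) (γ : ℝ) (hγ : 1 / 2 < γ) (hγ1 : γ < 1)
    (i : ℕ) (hi1 : 1 ≤ i) (hin : i ≤ n) :
    (∀ a : ℕ → Bool, discReward n γ a i < (1 + 2 * γ ^ (n - i + 1)) / (2 * (1 - γ))) ∧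
    Vstar n γ i < (1 + 2 * γ ^ (n - i + 1)) / (2 * (1 - γ)) := by
  have hγ0 : 0 < γ := by linarith
  have h1γ : 0 < 1 - γ := by linarith
  set k := n - i with hk
  have hsumgeo : Summable (fun t : ℕ => γ ^ t) :=
    summable_geometric_of_lt_one hγ0.le hγ1
  set M : ℝ := (1 + γ ^ k) / (2 * (1 - γ)) with hM
  -- the intermediate bound
  have hle : ∀ a : ℕ → Bool, discReward n γ a i ≤ M := by
    intro a
    have htraj : ∀ t, traj n a i t ≤ i + t := by
      intro t; induction t with
      | zero => simp [traj]
      | succ t ih =>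
        simp only [traj]
        split
        · exact le_trans (min_le_left _ _) (by omega)
        · omega
    have hrw : ∀ t, reward n (traj n a i t) ≤ (if k ≤ t then 1 else 1/2) := by
      intro t
      by_cases h : k ≤ t
      · simp only [h, if_true, reward]
        split <;> norm_num
      · have hlt : traj n a i t < n := lt_of_le_of_lt (htraj t) (by omega)
        simp [reward, hlt, h]
    have hrpos : ∀ s, 0 ≤ reward n s := by
      intro s; unfold reward; split <;> norm_num
    have hs1 : Summable (fun t : ℕ => γ ^ t * reward n (traj n a i t)) := by
      apply Summable.of_nonneg_of_le (fun t => mul_nonneg (pow_nonneg hγ0.le t) (hrpos _))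
        (fun t => ?_) hsumgeo
      calc γ ^ t * reward n (traj n a i t)
          ≤ γ ^ t * 1 := by
            refine mul_le_mul_of_nonneg_left ?_ (pow_nonneg hγ0.le t)
            exact le_trans (hrw t) (by split <;> norm_num)
        _ = γ ^ t := mul_one _
    have hs2 : Summable (fun t : ℕ => γ ^ t * (if k ≤ t then (1:ℝ) else 1/2)) := by
      apply Summable.of_nonneg_of_le (fun t => mul_nonneg (pow_nonneg hγ0.le t)
        (by split <;> norm_num)) (fun t => ?_) hsumgeo
      calc γ ^ t * (if k ≤ t then (1:ℝ) else 1/2)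
          ≤ γ ^ t * 1 := by
            refine mul_le_mul_of_nonneg_left ?_ (pow_nonneg hγ0.le t)
            split <;> norm_num
        _ = γ ^ t := mul_one _
    have hstep : discReward n γ a i ≤ ∑' t : ℕ, γ ^ t * (if k ≤ t then (1:ℝ) else 1/2) := by
      refine Summable.tsum_le_tsum (fun t => ?_) hs1 hs2
      exact mul_le_mul_of_nonneg_left (hrw t) (pow_nonneg hγ0.le t)
    -- compute the RHS tsum
    have hsplit : (fun t : ℕ => γ ^ t * (if k ≤ t then (1:ℝ) else 1/2))
        = fun t : ℕ => γ ^ t * (1/2) + (if k ≤ t then γ ^ t * (1/2) else 0) := by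
      funext t; split <;> ring
    have hsh : Summable (fun t : ℕ => if k ≤ t then γ ^ t * (1/2:ℝ) else 0) := by
      apply Summable.of_nonneg_of_le (fun t => by positivity) (fun t => ?_) hsumgeo
      split
      · nlinarith [pow_nonneg hγ0.le t]
      · positivity
    have hgeo : ∑' t : ℕ, γ ^ t = (1 - γ)⁻¹ := tsum_geometric_of_lt_one hγ0.le hγ1
    have h1 : ∑' t : ℕ, γ ^ t * (1/2:ℝ) = (1 - γ)⁻¹ * (1/2) := by
      rw [tsum_mul_right, hgeo]
    have h2 : ∑' t : ℕ, (if k ≤ t then γ ^ t * (1/2:ℝ) else 0)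
        = γ ^ k * ((1 - γ)⁻¹ * (1/2)) := by
      have := Summable.sum_add_tsum_nat_add k hsh
      have hz : ∑ t ∈ Finset.range k, (if k ≤ t then γ ^ t * (1/2:ℝ) else 0) = 0 := by
        apply Finset.sum_eq_zero
        intro t ht
        rw [Finset.mem_range] at ht
        simp [Nat.not_le.mpr ht]
      have hshift : ∀ t : ℕ, (if k ≤ t + k then γ ^ (t + k) * (1/2:ℝ) else 0)
          = γ ^ k * (γ ^ t * (1/2)) := by
        intro t
        rw [if_pos (Nat.le_add_left _ _), pow_add]; ring
      rw [hz, zero_add] at this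
      rw [← this]
      simp_rw [hshift]
      rw [tsum_mul_left, tsum_mul_right, hgeo]
    calc discReward n γ a i ≤ _ := hstep
      _ = (1 - γ)⁻¹ * (1/2) + γ ^ k * ((1 - γ)⁻¹ * (1/2)) := by
          rw [hsplit, Summable.tsum_add (hsumgeo.mul_right _) hsh, h1, h2]
      _ = M := by
          rw [hM, eq_div_iff (by positivity : (2:ℝ) * (1 - γ) ≠ 0)]
          field_simp
  have hMlt : M < (1 + 2 * γ ^ (k + 1)) / (2 * (1 - γ)) := by
    rw [hM, div_lt_div_iff_of_pos_right (by linarith : 0 < 2 * (1 - γ))]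
    have hpk : 0 < γ ^ k := pow_pos hγ0 k
    have : γ ^ (k + 1) = γ * γ ^ k := by ring
    nlinarith
  refine ⟨fun a => lt_of_le_of_lt (hle a) hMlt, lt_of_le_of_lt ?_ hMlt⟩
  exact ciSup_le hle
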